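/- For every function f in C^2[0,1], the n-th Bernstein polynomial B_n(f)(x) = Σ_{i=0}^n f(i/n) C(n,i) x^i (1-x)^{n-i} satisfies |f(x) - B_n(f)(x)| ≤ (1/(8n)) · sup_{t∈[0,1]} |f''(t)| for all x ∈ [0,1]. -/

import Mathlib

open Set

/-- Bernstein basis polynomial `b_{n,i}(x) = C(n,i) x^i (1-x)^(n-i)`. -/
noncomputable def bern (n i : ℕ) (x : ℝ) : ℝ := (n.choose i : ℝ) * x ^ i * (1 - x) ^ (n - i)

lemma iteratedDerivWithin_of_mem_nhds' {n : ℕ} {f : ℝ → ℝ} {s : Set ℝ} {y : ℝ} (h : s ∈ nhds y) :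
    iteratedDerivWithin n f s y = iteratedDeriv n f y := by
  rw [iteratedDerivWithin_eq_iteratedFDerivWithin, iteratedDeriv_eq_iteratedFDeriv]
  congr 1
  rw [← iteratedFDerivWithin_univ, ← Set.univ_inter s, iteratedFDerivWithin_inter h]

lemma bern_eval (n i : ℕ) (x : ℝ) : bern n i x = (bernsteinPolynomial ℝ n i).eval x := by
  simp [bern, bernsteinPolynomial]

lemma bern_sum (n : ℕ) (x : ℝ) :
    ∑ i ∈ Finset.range (n + 1), bern n i x = 1 := by
  have := congrArg (Polynomial.eval x) (bernsteinPolynomial.sum ℝ n)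
  simp only [bern_eval]
  simpa [Polynomial.eval_finset_sum] using this

lemma bern_sum_smul (n : ℕ) (x : ℝ) :
    ∑ i ∈ Finset.range (n + 1), (i : ℝ) * bern n i x = n * x := by
  have := congrArg (Polynomial.eval x) (bernsteinPolynomial.sum_smul ℝ n)
  simp only [bern_eval]
  simpa [Polynomial.eval_finset_sum] using this

lemma bern_variance (n : ℕ) (x : ℝ) :
    ∑ i ∈ Finset.range (n + 1), ((n : ℝ) * x - i) ^ 2 * bern n i x = n * x * (1 - x) := by
  have := congrArg (Polynomial.eval x) (bernsteinPolynomial.variance ℝ n)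
  simp only [bern_eval]
  simpa [Polynomial.eval_finset_sum] using this

lemma taylorWithinEval_one' {f : ℝ → ℝ} {s : Set ℝ} {x₀ : ℝ} (h : UniqueDiffWithinAt ℝ s x₀)
    (y : ℝ) : taylorWithinEval f 1 s x₀ y = f x₀ + derivWithin f s x₀ * (y - x₀) := by
  rw [taylor_within_apply]
  simp [Finset.sum_range_succ, iteratedDerivWithin_zero, iteratedDerivWithin_one]
  ring

lemma key_taylor {f : ℝ → ℝ} (hf : ContDiffOn ℝ 2 f (Icc (0:ℝ) 1)) {M : ℝ}
    (hM : ∀ z ∈ Ioo (0:ℝ) 1, |iteratedDeriv 2 f z| ≤ M)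
    {x y : ℝ} (hx : x ∈ Icc (0:ℝ) 1) (hy : y ∈ Icc (0:ℝ) 1) :
    |f y - f x - derivWithin f (Icc (0:ℝ) 1) x * (y - x)| ≤ M / 2 * (y - x) ^ 2 := by
  set d := derivWithin f (Icc (0:ℝ) 1) x with hd
  rcases lt_trichotomy x y with hxy | rfl | hyx
  · -- case x < y
    have hsub : Icc x y ⊆ Icc (0:ℝ) 1 := Icc_subset_Icc hx.1 hy.2
    have h2 : ContDiffOn ℝ 2 f (Icc x y) := hf.mono hsub
    have hud : UniqueDiffOn ℝ (Icc x y) := uniqueDiffOn_Icc hxy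
    have hdiff : DifferentiableOn ℝ (iteratedDerivWithin 1 f (Icc x y)) (Ioo x y) :=
      (h2.differentiableOn_iteratedDerivWithin (by norm_num) hud).mono Ioo_subset_Icc_self
    obtain ⟨x', hx', hform⟩ := taylor_mean_remainder_lagrange (n := 1) hxy.ne
      (by rw [uIcc_of_le hxy.le]; exact h2.of_le (by norm_num))
      (by rw [uIcc_of_le hxy.le, uIoo_of_le hxy.le]; exact hdiff)
    rw [uIcc_of_le hxy.le, uIoo_of_le hxy.le] at *
    have hxI : x ∈ Icc x y := ⟨le_refl x, hxy.le⟩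
    have htay : taylorWithinEval f 1 (Icc x y) x y = f x + derivWithin f (Icc x y) x * (y - x) :=
      taylorWithinEval_one' (hud x hxI) y
    have hdEq : derivWithin f (Icc x y) x = d := by
      rw [hd]
      exact derivWithin_subset hsub (hud x hxI)
        ((hf.differentiableOn (by norm_num)) x hx)
    have hx'I : x' ∈ Ioo (0:ℝ) 1 := ⟨lt_of_le_of_lt hx.1 hx'.1, lt_of_lt_of_le hx'.2 hy.2⟩
    have hnb : Icc x y ∈ nhds x' := Icc_mem_nhds hx'.1 hx'.2
    rw [htay, hdEq] at hform
    have : f y - f x - d * (y - x) = iteratedDeriv 2 f x' * (y - x) ^ 2 / 2 := by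
      rw [← iteratedDerivWithin_of_mem_nhds' hnb]
      have := hform
      norm_num at this ⊢
      linarith [this]
    rw [this]
    rw [abs_div, abs_mul, abs_pow]
    have h1 : |iteratedDeriv 2 f x'| ≤ M := hM x' hx'I
    have h2' : |y - x| ^ 2 = (y - x) ^ 2 := sq_abs _
    rw [h2', abs_of_nonneg (by norm_num : (0:ℝ) ≤ 2)]
    calc |iteratedDeriv 2 f x'| * (y - x) ^ 2 / 2 ≤ M * (y - x) ^ 2 / 2 := by
          gcongr
      _ = M / 2 * (y - x) ^ 2 := by ring
  · simp
  · -- case y < x : reflect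
    set c := x + y with hc
    set F : ℝ → ℝ := fun t => f (c - t) with hF
    have hmap : MapsTo (fun t => c - t) (Icc y x) (Icc (0:ℝ) 1) := by
      intro t ht
      constructor
      · have := ht.2; simp only [hc]; linarith [hy.1]
      · have := ht.1; simp only [hc]; linarith [hx.2]
    have hcd : ContDiffOn ℝ 2 F (Icc y x) :=
      hf.comp ((contDiff_const.sub contDiff_id).contDiffOn) hmap
    have hud : UniqueDiffOn ℝ (Icc y x) := uniqueDiffOn_Icc hyx
    have hdiff : DifferentiableOn ℝ (iteratedDerivWithin 1 F (Icc y x)) (Ioo y x) :=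
      (hcd.differentiableOn_iteratedDerivWithin (by norm_num) hud).mono Ioo_subset_Icc_self
    obtain ⟨x', hx', hform⟩ := taylor_mean_remainder_lagrange (n := 1) hyx.ne
      (by rw [uIcc_of_le hyx.le]; exact hcd.of_le (by norm_num))
      (by rw [uIcc_of_le hyx.le, uIoo_of_le hyx.le]; exact hdiff)
    rw [uIcc_of_le hyx.le, uIoo_of_le hyx.le] at *
    have hyI : y ∈ Icc y x := ⟨le_refl y, hyx.le⟩
    have htay : taylorWithinEval F 1 (Icc y x) y x = F y + derivWithin F (Icc y x) y * (x - y) :=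
      taylorWithinEval_one' (hud y hyI) x
    have hfd : HasDerivWithinAt f d (Icc (0:ℝ) 1) x :=
      (((hf.differentiableOn (by norm_num)) x hx)).hasDerivWithinAt
    have hfd2 : HasDerivWithinAt f d (Icc y x) x := hfd.mono (Icc_subset_Icc hy.1 hx.2)
    have hneg : HasDerivWithinAt (fun t : ℝ => c - t) (-1) (Icc y x) y :=
      ((hasDerivAt_id y).const_sub c).hasDerivWithinAt
    have hmap2 : MapsTo (fun t => c - t) (Icc y x) (Icc y x) := by
      intro t ht
      exact ⟨by simp only [hc]; linarith [ht.2], by simp only [hc]; linarith [ht.1]⟩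
    have hcomp : HasDerivWithinAt F (d * (-1)) (Icc y x) y := by
      have : (c - y) = x := by simp [hc]
      exact HasDerivWithinAt.comp y (this ▸ hfd2) hneg hmap2
    have hdF : derivWithin F (Icc y x) y = -d := by
      rw [hcomp.derivWithin (hud y hyI)]; ring
    have hFid : ∀ z ∈ Ioo y x, iteratedDeriv 2 F z = iteratedDeriv 2 f (c - z) := by
      intro z hz
      have : F = fun t => (fun u => f (c + u)) (-t) := by
        funext t; simp [hF, sub_eq_add_neg]
      rw [this, iteratedDeriv_comp_neg 2 (fun u => f (c + u)) z,
        iteratedDeriv_comp_const_add]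
      norm_num [sub_eq_add_neg]
    have hcx' : c - x' ∈ Ioo (0:ℝ) 1 := by
      constructor
      · have := hx'.2; simp only [hc]; linarith [hy.1]
      · have := hx'.1; simp only [hc]; linarith [hx.2]
    have hnb : Icc y x ∈ nhds x' := Icc_mem_nhds hx'.1 hx'.2
    rw [htay, hdF] at hform
    have hFx : F x = f y := by simp [hF, hc]
    have hFy : F y = f x := by simp [hF, hc]
    rw [hFx, hFy] at hform
    have hval : f y - f x - d * (y - x) = iteratedDeriv 2 f (c - x') * (x - y) ^ 2 / 2 := by
      rw [← hFid x' hx', ← iteratedDerivWithin_of_mem_nhds' hnb]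
      have := hform
      norm_num at this ⊢
      linarith [this]
    rw [hval, abs_div, abs_mul, abs_pow]
    have h1 : |iteratedDeriv 2 f (c - x')| ≤ M := hM _ hcx'
    have h2' : |x - y| ^ 2 = (y - x) ^ 2 := by rw [sq_abs]; ring
    rw [h2', abs_of_nonneg (by norm_num : (0:ℝ) ≤ 2)]
    calc |iteratedDeriv 2 f (c - x')| * (y - x) ^ 2 / 2 ≤ M * (y - x) ^ 2 / 2 := by
          gcongr
      _ = M / 2 * (y - x) ^ 2 := by ring

/-- For `f ∈ C²[0,1]`, the Bernstein polynomial `B_n(f)` satisfies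
`|f(x) - B_n(f)(x)| ≤ (1/(8n)) · sup_{t∈[0,1]} |f''(t)|` on `[0,1]`. -/
theorem bernstein_C2_error (n : ℕ) (hn : 0 < n) (f : ℝ → ℝ)
    (hf : ContDiffOn ℝ 2 f (Set.Icc (0:ℝ) 1)) (x : ℝ) (hx : x ∈ Set.Icc (0:ℝ) 1) :
    |f x - ∑ i ∈ Finset.range (n + 1), f ((i : ℝ) / n) * bern n i x| ≤
      (1 / (8 * n)) * sSup ((fun t => |iteratedDeriv 2 f t|) '' Set.Icc (0:ℝ) 1) := by
  set M := sSup ((fun t => |iteratedDeriv 2 f t|) '' Set.Icc (0:ℝ) 1) with hMdef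
  -- boundedness of the sup set
  have hgc : ContinuousOn (iteratedDerivWithin 2 f (Icc (0:ℝ) 1)) (Icc (0:ℝ) 1) :=
    hf.continuousOn_iteratedDerivWithin le_rfl (uniqueDiffOn_Icc one_pos)
  have hK : BddAbove ((fun t => |iteratedDerivWithin 2 f (Icc (0:ℝ) 1) t|) '' Icc (0:ℝ) 1) :=
    (isCompact_Icc.image_of_continuousOn hgc.abs).bddAbove
  have hBdd : BddAbove ((fun t => |iteratedDeriv 2 f t|) '' Set.Icc (0:ℝ) 1) := by
    refine (((hK.insert (|iteratedDeriv 2 f 0|)).insert (|iteratedDeriv 2 f 1|))).mono ?_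
    rintro v ⟨t, ht, rfl⟩
    rcases eq_or_lt_of_le ht.1 with h0 | h0
    · exact Set.mem_insert_iff.2 (Or.inr (Set.mem_insert_iff.2 (Or.inl (by rw [← h0]))))
    rcases eq_or_lt_of_le ht.2 with h1 | h1
    · exact Set.mem_insert_iff.2 (Or.inl (by rw [h1]))
    refine Set.mem_insert_iff.2 (Or.inr (Set.mem_insert_iff.2 (Or.inr ⟨t, ht, ?_⟩)))
    show |iteratedDerivWithin 2 f (Icc (0:ℝ) 1) t| = |iteratedDeriv 2 f t|
    rw [iteratedDerivWithin_of_mem_nhds' (Icc_mem_nhds h0 h1)]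
  have hM : ∀ z ∈ Ioo (0:ℝ) 1, |iteratedDeriv 2 f z| ≤ M := fun z hz =>
    le_csSup hBdd ⟨z, Ioo_subset_Icc_self hz, rfl⟩
  have hM0 : 0 ≤ M := le_trans (abs_nonneg _) (le_csSup hBdd ⟨x, hx, rfl⟩)
  -- moments
  have hnpos : (0:ℝ) < n := by exact_mod_cast hn
  have hn' : (n:ℝ) ≠ 0 := ne_of_gt hnpos
  have hb0 : ∀ i, 0 ≤ bern n i x := by
    intro i
    unfold bern
    have h1 : (0:ℝ) ≤ x := hx.1
    have h2 : (0:ℝ) ≤ 1 - x := by linarith [hx.2]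
    positivity
  have S0 := bern_sum n x
  have S1 := bern_sum_smul n x
  have S2 := bern_variance n x
  have hS1' : ∑ i ∈ Finset.range (n + 1), ((i:ℝ)/n - x) * bern n i x = 0 := by
    have e : ∀ i ∈ Finset.range (n + 1),
        ((i:ℝ)/n - x) * bern n i x = ((i:ℝ) * bern n i x)/n - x * bern n i x := by
      intro i _; ring
    rw [Finset.sum_congr rfl e, Finset.sum_sub_distrib, ← Finset.sum_div, ← Finset.mul_sum,
      S1, S0]
    field_simp
    simp
  have hS2' : ∑ i ∈ Finset.range (n + 1), ((i:ℝ)/n - x) ^ 2 * bern n i x = x * (1 - x) / n := by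
    have e : ∀ i ∈ Finset.range (n + 1),
        ((i:ℝ)/n - x) ^ 2 * bern n i x = (((n:ℝ) * x - i) ^ 2 * bern n i x) / n ^ 2 := by
      intro i _
      have : ((i:ℝ)/n - x) ^ 2 = ((n:ℝ) * x - i) ^ 2 / n ^ 2 := by
        field_simp; ring
      rw [this]; ring
    rw [Finset.sum_congr rfl e, ← Finset.sum_div, S2]
    field_simp
  set d := derivWithin f (Icc (0:ℝ) 1) x with hd
  have hE : f x - ∑ i ∈ Finset.range (n + 1), f ((i:ℝ)/n) * bern n i x
      = ∑ i ∈ Finset.range (n + 1), (f x + d * ((i:ℝ)/n - x) - f ((i:ℝ)/n)) * bern n i x := by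
    have e : ∀ i ∈ Finset.range (n + 1),
        (f x + d * ((i:ℝ)/n - x) - f ((i:ℝ)/n)) * bern n i x
          = f x * bern n i x + d * (((i:ℝ)/n - x) * bern n i x) - f ((i:ℝ)/n) * bern n i x := by
      intro i _; ring
    rw [Finset.sum_congr rfl e, Finset.sum_sub_distrib, Finset.sum_add_distrib,
      ← Finset.mul_sum, ← Finset.mul_sum, hS1', S0]
    ring
  rw [hE]
  calc |∑ i ∈ Finset.range (n + 1), (f x + d * ((i:ℝ)/n - x) - f ((i:ℝ)/n)) * bern n i x|
      ≤ ∑ i ∈ Finset.range (n + 1), |(f x + d * ((i:ℝ)/n - x) - f ((i:ℝ)/n)) * bern n i x| :=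
        Finset.abs_sum_le_sum_abs _ _
    _ ≤ ∑ i ∈ Finset.range (n + 1), (M / 2 * ((i:ℝ)/n - x) ^ 2) * bern n i x := by
        refine Finset.sum_le_sum fun i hi => ?_
        rw [abs_mul, abs_of_nonneg (hb0 i)]
        refine mul_le_mul_of_nonneg_right ?_ (hb0 i)
        have hyI : (i:ℝ)/n ∈ Icc (0:ℝ) 1 := by
          constructor
          · positivity
          · rw [div_le_one hnpos]
            exact_mod_cast Nat.lt_succ_iff.mp (Finset.mem_range.mp hi)
        have hkey := key_taylor hf hM hx hyI
        have : |f x + d * ((i:ℝ)/n - x) - f ((i:ℝ)/n)|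
            = |f ((i:ℝ)/n) - f x - d * ((i:ℝ)/n - x)| := by
          rw [show f x + d * ((i:ℝ)/n - x) - f ((i:ℝ)/n)
            = -(f ((i:ℝ)/n) - f x - d * ((i:ℝ)/n - x)) by ring, abs_neg]
        rw [this]
        exact hkey
    _ = M / 2 * (x * (1 - x) / n) := by
        rw [← hS2', Finset.mul_sum]
        exact Finset.sum_congr rfl fun i _ => by ring
    _ ≤ 1 / (8 * n) * M := by
        have h4 : x * (1 - x) ≤ 1/4 := by nlinarith [sq_nonneg (x - 1/2)]
        have e1 : M / 2 * (x * (1 - x) / n) = M * (x * (1 - x)) / (2 * n) := by ring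
        have e2 : 1 / (8 * n) * M = M * (1/4) / (2 * n) := by
          rw [div_mul_eq_mul_div, one_mul,
            div_eq_div_iff (by positivity : (8:ℝ) * n ≠ 0) (by positivity : (2:ℝ) * n ≠ 0)]
          ring
        rw [e1, e2]
        gcongr
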